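/- Let W be a symmetric 2×2×2 real tensor with W₂₂₂ ≠ 0, and let T(x) be the rotation of W by angle arctan(x). If τ(x) = T₁₁₁(x)² attains its maximum over the extended reals at x = 0, then W₁₁₁(2W₁₂₂ - W₁₁₁) < 0. -/
import Mathlib

open Real

set_option maxHeartbeats 1000000 in
theorem stmt_7 (W111 W112 W122 W222 : ℝ) (hW : W222 ≠ 0)
    (T111 : ℝ → ℝ)
    (hT111 : ∀ x, T111 x = (cos (arctan x))^3 * W111
        + 3 * (cos (arctan x))^2 * sin (arctan x) * W112
        + 3 * cos (arctan x) * (sin (arctan x))^2 * W122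
        + (sin (arctan x))^3 * W222)
    (τ : ℝ → ℝ) (hτ : ∀ x, τ x = (T111 x)^2)
    (hmax : ∀ x, τ x ≤ τ 0) (hmaxInf : W222^2 ≤ τ 0) :
    W111 * (2 * W122 - W111) < 0 := by
  set a := W111 with ha_def
  set b := W112 with hb_def
  set c := W122 with hc_def
  set e := W222 with he_def
  have hτ0 : τ 0 = a^2 := by rw [hτ, hT111]; simp
  -- key polynomial inequality
  have h1 : ∀ x : ℝ, (a + 3*b*x + 3*c*x^2 + e*x^3)^2 ≤ a^2 * (1+x^2)^3 := by
    intro x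
    have hne : (1:ℝ) + x^2 ≠ 0 := by positivity
    have hsin : sin (arctan x) = x * cos (arctan x) := by
      rw [Real.sin_arctan, Real.cos_arctan]; ring
    have hc2 : cos (arctan x)^2 = 1/(1+x^2) := by
      rw [Real.cos_arctan, div_pow, Real.sq_sqrt (by positivity)]; norm_num
    have hT : T111 x = cos (arctan x)^3 * (a + 3*b*x + 3*c*x^2 + e*x^3) := by
      rw [hT111, hsin]; ring
    have hid : (T111 x)^2 * (1+x^2)^3 = (a + 3*b*x + 3*c*x^2 + e*x^3)^2 := by
      calc (T111 x)^2 * (1+x^2)^3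
          = (cos (arctan x)^2)^3 * ((1+x^2)^3 * (a + 3*b*x + 3*c*x^2 + e*x^3)^2) := by
            rw [hT]; ring
        _ = (a + 3*b*x + 3*c*x^2 + e*x^3)^2 := by rw [hc2]; field_simp
    have hp3 : (0:ℝ) < (1+x^2)^3 := by positivity
    have hmx := hmax x
    rw [hτ, hτ0] at hmx
    calc (a + 3*b*x + 3*c*x^2 + e*x^3)^2 = (T111 x)^2 * (1+x^2)^3 := hid.symm
      _ ≤ a^2 * (1+x^2)^3 := mul_le_mul_of_nonneg_right hmx hp3.le
  have hEA : e^2 ≤ a^2 := by rw [hτ0] at hmaxInf; exact hmaxInf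
  have he2 : 0 < e^2 := by positivity
  have ha : a ≠ 0 := by intro h0; rw [h0] at hEA; nlinarith
  have ha2 : 0 < a^2 := by positivity
  by_contra hcon
  push_neg at hcon
  have hac : a^2 ≤ 2*a*c := by nlinarith
  set p := 3*(a^2 - 3*b^2 - 2*a*c) with hp_def
  set q := 3*(a^2 - 3*c^2 - 2*b*e) with hq_def
  set r := a^2 - e^2 with hr_def
  have hEven : ∀ t : ℝ, 0 ≤ p*t^2 + q*t^4 + r*t^6 := by
    intro t
    have hid2 : 2*(p*t^2 + q*t^4 + r*t^6)
        = (a^2*(1+t^2)^3 - (a + 3*b*t + 3*c*t^2 + e*t^3)^2)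
        + (a^2*(1+(-t)^2)^3 - (a + 3*b*(-t) + 3*c*(-t)^2 + e*(-t)^3)^2) := by
      rw [hp_def, hq_def, hr_def]; ring
    linarith [h1 t, h1 (-t)]
  have hp_nonneg : 0 ≤ p := by
    by_contra hp
    push_neg at hp
    set M := |q| + |r| + 1 with hM_def
    have hM : 0 < M := by positivity
    set t := min 1 ((-p)/M) with ht_def
    have ht0 : 0 < t := lt_min one_pos (div_pos (by linarith) hM)
    have ht1 : t ≤ 1 := min_le_left _ _
    have ht2 : t ≤ (-p)/M := min_le_right _ _
    have htM : t * M ≤ -p := by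
      rw [← le_div_iff₀ hM]; exact ht2
    have hEt := hEven t
    have habsq : 0 ≤ |q| := abs_nonneg q
    have habsr : 0 ≤ |r| := abs_nonneg r
    have hq4 : q * t^4 ≤ |q| * t^4 :=
      mul_le_mul_of_nonneg_right (le_abs_self q) (by positivity)
    have hr6 : r * t^6 ≤ |r| * t^6 :=
      mul_le_mul_of_nonneg_right (le_abs_self r) (by positivity)
    have ht6 : t^6 ≤ t^4 := pow_le_pow_of_le_one ht0.le ht1 (by norm_num)
    have ht4 : t^4 ≤ t^3 := pow_le_pow_of_le_one ht0.le ht1 (by norm_num)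
    have hr64 : |r| * t^6 ≤ |r| * t^4 := mul_le_mul_of_nonneg_left ht6 habsr
    have hB : (|q|+|r|) * t^4 ≤ (|q|+|r|) * t^3 :=
      mul_le_mul_of_nonneg_left ht4 (by positivity)
    have hC : (|q|+|r|) * t^3 = ((M-1)*t) * t^2 := by rw [hM_def]; ring
    have hD2 : (M-1)*t < -p := by
      have hrw : (M-1)*t = t*M - t := by ring
      rw [hrw]; linarith
    have hE2 : ((M-1)*t) * t^2 < (-p) * t^2 :=
      mul_lt_mul_of_pos_right hD2 (by positivity)
    nlinarith [hEt, hq4, hr6, hr64, hB, hC, hE2]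
  -- now b = 0 and 2ac = a^2
  have hb2 : b^2 ≤ 0 := by linarith [hp_nonneg, hp_def, hac]
  have hb2e : b^2 = 0 := le_antisymm hb2 (sq_nonneg b)
  have hb0 : b = 0 := by
    exact pow_eq_zero_iff (by norm_num) |>.mp hb2e
  have h2 : 2*a*c = a^2 := le_antisymm (by linarith [hp_nonneg]) hac
  have hceq : 2*c = a := mul_left_cancel₀ ha (by linear_combination h2)
  have hc' : c = a/2 := by linarith
  -- plug x = 2e/a
  have key := h1 (2*e/a)
  rw [hb0, hc'] at key
  have h3 : (a + 3*0*(2*e/a) + 3*(a/2)*(2*e/a)^2 + e*(2*e/a)^3) * a^3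
      = a^4 + 6*a^2*e^2 + 8*e^4 := by
    field_simp; ring
  have h4 : (1 + (2*e/a)^2) * a^2 = a^2 + 4*e^2 := by field_simp; ring
  have hkey : (a^4 + 6*a^2*e^2 + 8*e^4)^2 ≤ a^2 * (a^2 + 4*e^2)^3 := by
    calc (a^4 + 6*a^2*e^2 + 8*e^4)^2
        = ((a + 3*0*(2*e/a) + 3*(a/2)*(2*e/a)^2 + e*(2*e/a)^3) * a^3)^2 := by rw [h3]
      _ = (a + 3*0*(2*e/a) + 3*(a/2)*(2*e/a)^2 + e*(2*e/a)^3)^2 * (a^3)^2 := by ring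
      _ ≤ (a^2 * (1+(2*e/a)^2)^3) * (a^3)^2 :=
          mul_le_mul_of_nonneg_right key (sq_nonneg _)
      _ = a^2 * ((1 + (2*e/a)^2) * a^2)^3 := by ring
      _ = a^2 * (a^2 + 4*e^2)^3 := by rw [h4]
  have hdiff : a^2 * (a^2 + 4*e^2)^3 - (a^4 + 6*a^2*e^2 + 8*e^4)^2
      = -(4*(a^2)^2*(e^2)^2 + 32*a^2*(e^2)^3 + 64*(e^2)^4) := by ring
  nlinarith [hkey, hdiff, mul_pos (mul_pos ha2 ha2) (mul_pos he2 he2),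
    mul_pos ha2 (mul_pos he2 (mul_pos he2 he2)),
    mul_pos (mul_pos he2 he2) (mul_pos he2 he2)]
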